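/- Let G = (V,E) be a locally d⁻-finite digraph. For any X, Y ⊆ V, Inf^∞ X ∩ Inf^∞ Y = Inf^∞[(X ∩ Inf^∞ Y) ∪ (Inf^∞ X ∩ Y)]. -/

import Mathlib

/-- Inflation of a vertex set in a digraph with arc relation `E`. -/
def dInfl {V : Type*} (E : V → V → Prop) (U : Set V) : Set V :=
  U ∪ {v | (∃ u, E u v) ∧ ∀ u, E u v → u ∈ U}

/-- Hyperinflation: union of all iterates of the inflation. -/
def dInflStar {V : Type*} (E : V → V → Prop) (U : Set V) : Set V :=
  ⋃ n : ℕ, (dInfl E)^[n] U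

section aux
variable {V : Type*} (E : V → V → Prop)

lemma dInfl_mono {A B : Set V} (h : A ⊆ B) : dInfl E A ⊆ dInfl E B := by
  rintro v (hv | ⟨he, hall⟩)
  · exact Or.inl (h hv)
  · exact Or.inr ⟨he, fun u hu => h (hall u hu)⟩

lemma subset_dInfl (A : Set V) : A ⊆ dInfl E A := fun _ h => Or.inl h

lemma iter_mono {A B : Set V} (h : A ⊆ B) (n : ℕ) :
    (dInfl E)^[n] A ⊆ (dInfl E)^[n] B := by
  induction n with
  | zero => exact h
  | succ n ih =>
    rw [Function.iterate_succ_apply', Function.iterate_succ_apply']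
    exact dInfl_mono E ih

lemma iter_subset_star (A : Set V) (n : ℕ) : (dInfl E)^[n] A ⊆ dInflStar E A :=
  Set.subset_iUnion (fun n => (dInfl E)^[n] A) n

lemma subset_star (A : Set V) : A ⊆ dInflStar E A := iter_subset_star E A 0

lemma star_mono {A B : Set V} (h : A ⊆ B) : dInflStar E A ⊆ dInflStar E B :=
  Set.iUnion_mono fun n => iter_mono E h n

lemma iter_le {m n : ℕ} (h : m ≤ n) (A : Set V) :
    (dInfl E)^[m] A ⊆ (dInfl E)^[n] A := by
  induction n with
  | zero =>
    have : m = 0 := Nat.le_zero.mp h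
    subst this; exact subset_rfl
  | succ n ih =>
    rcases Nat.lt_or_ge m (n + 1) with h' | h'
    · intro x hx
      rw [Function.iterate_succ_apply']
      exact subset_dInfl E _ (ih (Nat.lt_succ_iff.mp h') hx)
    · have : m = n + 1 := le_antisymm h h'
      subst this; exact subset_rfl

lemma bdd_aux (A : Set V) : ∀ s : Set V, s.Finite →
    (∀ u ∈ s, ∃ n, u ∈ (dInfl E)^[n] A) → ∃ N, ∀ u ∈ s, u ∈ (dInfl E)^[N] A := by
  intro s hs
  refine Set.Finite.induction_on
    (motive := fun s _ => (∀ u ∈ s, ∃ n, u ∈ (dInfl E)^[n] A) → ∃ N, ∀ u ∈ s, u ∈ (dInfl E)^[N] A)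
    s hs (fun _ => ⟨0, by simp⟩) ?_
  intro a s ha hsf ih h
  obtain ⟨N, hN⟩ := ih (fun u hu => h u (Set.mem_insert_of_mem _ hu))
  obtain ⟨M, hM⟩ := h _ (Set.mem_insert _ _)
  refine ⟨max N M, ?_⟩
  rintro u (rfl | hu)
  · exact iter_le E (le_max_right N M) A hM
  · exact iter_le E (le_max_left N M) A (hN u hu)

lemma star_closed (hfin : ∀ v : V, {u | E u v}.Finite) (A : Set V) :
    dInfl E (dInflStar E A) ⊆ dInflStar E A := by
  rintro v (hv | ⟨he, hall⟩)
  · exact hv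
  · obtain ⟨N, hN⟩ := bdd_aux E A {u | E u v} (hfin v)
      (fun u hu => Set.mem_iUnion.mp (hall u hu))
    refine iter_subset_star E A (N + 1) ?_
    rw [Function.iterate_succ_apply']
    exact Or.inr ⟨he, hN⟩

lemma star_le_closed {A S : Set V} (hA : A ⊆ S) (hS : dInfl E S ⊆ S) :
    dInflStar E A ⊆ S := by
  refine Set.iUnion_subset fun n => ?_
  induction n with
  | zero => exact hA
  | succ n ih =>
    rw [Function.iterate_succ_apply']
    exact (dInfl_mono E ih).trans hS

lemma key (hfin : ∀ v : V, {u | E u v}.Finite) (X Y : Set V) :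
    ∀ k m n, m + n ≤ k → ∀ v, v ∈ (dInfl E)^[m] X → v ∈ (dInfl E)^[n] Y →
      v ∈ dInflStar E ((X ∩ dInflStar E Y) ∪ (dInflStar E X ∩ Y)) := by
  intro k
  induction k with
  | zero =>
    intro m n hmn v hx hy
    have hm : m = 0 := by omega
    have hn : n = 0 := by omega
    subst hm; subst hn
    exact subset_star E _ (Or.inl ⟨hx, subset_star E Y hy⟩)
  | succ k ih =>
    intro m n hmn v hx hy
    cases m with
    | zero =>
      exact subset_star E _ (Or.inl ⟨hx, iter_subset_star E Y n hy⟩)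
    | succ m =>
      cases n with
      | zero =>
        exact subset_star E _ (Or.inr ⟨iter_subset_star E X (m + 1) hx, hy⟩)
      | succ n =>
        rw [Function.iterate_succ_apply'] at hx hy
        rcases hx with hx' | ⟨he, hallX⟩
        · rcases hy with hy' | hy'
          · exact ih m n (by omega) v hx' hy'
          · exact ih m (n + 1) (by omega) v hx'
              (by rw [Function.iterate_succ_apply']; exact Or.inr hy')
        · rcases hy with hy' | ⟨_, hallY⟩
          · exact ih (m + 1) n (by omega) v
              (by rw [Function.iterate_succ_apply']; exact Or.inr ⟨he, hallX⟩) hy'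
          · refine star_closed E hfin _ (Or.inr ⟨he, fun u hu => ?_⟩)
            exact ih m n (by omega) u (hallX u hu) (hallY u hu)

end aux

theorem stmt_6 {V : Type*} (E : V → V → Prop)
    (hfin : ∀ v : V, {u | E u v}.Finite) (X Y : Set V) :
    dInflStar E X ∩ dInflStar E Y =
      dInflStar E ((X ∩ dInflStar E Y) ∪ (dInflStar E X ∩ Y)) := by
  apply Set.Subset.antisymm
  · rintro v ⟨hvx, hvy⟩
    obtain ⟨m, hm⟩ := Set.mem_iUnion.mp hvx
    obtain ⟨n, hn⟩ := Set.mem_iUnion.mp hvy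
    exact key E hfin X Y (m + n) m n le_rfl v hm hn
  · refine star_le_closed E ?_ ?_
    · rintro v (⟨hvx, hvy⟩ | ⟨hvx, hvy⟩)
      · exact ⟨subset_star E X hvx, hvy⟩
      · exact ⟨hvx, subset_star E Y hvy⟩
    · intro v hv
      have h1 : dInfl E (dInflStar E X ∩ dInflStar E Y) ⊆
          dInfl E (dInflStar E X) ∩ dInfl E (dInflStar E Y) :=
        Set.subset_inter (dInfl_mono E Set.inter_subset_left)
          (dInfl_mono E Set.inter_subset_right)
      obtain ⟨ha, hb⟩ := h1 hv
      exact ⟨star_closed E hfin X ha, star_closed E hfin Y hb⟩
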